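/- There exists a subset T of (ℕ ⊕ Unit)^ω that is clopen in the product topology (hence completely monitorable) but does not have bounded discriminating prefixes: for every n there is a finite word of length n that is neither a good nor a bad prefix for T. One such T is the set of traces of the form d₀ d₁ … d_k # u where d₀ > d₁ > … > d_k is a strictly decreasing sequence of naturals, # is the unit symbol, and u is arbitrary. -/
import Mathlib


/-- A finite trace `w` is an initial segment of the infinite trace `t`. -/
def Extends {A : Type*} (w : List A) (t : ℕ → A) : Prop :=
  ∀ i : Fin w.length, t i.1 = w.get i

/-- `w` is a good prefix for `T`: every infinite trace extending `w` is in `T`. -/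
def GoodPrefix {A : Type*} (T : Set (ℕ → A)) (w : List A) : Prop :=
  ∀ t : ℕ → A, Extends w t → t ∈ T

/-- `w` is a bad prefix for `T`: no infinite trace extending `w` is in `T`. -/
def BadPrefix {A : Type*} (T : Set (ℕ → A)) (w : List A) : Prop :=
  ∀ t : ℕ → A, Extends w t → t ∉ T

/-- Traces over `ℕ ⊕ Unit` that start with a (possibly empty) strictly decreasing
block of naturals immediately followed by the symbol `#` (the unit element). -/
def DecBlock : Set (ℕ → (ℕ ⊕ Unit)) :=
  {t | ∃ (k : ℕ) (f : ℕ → ℕ),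
    t k = Sum.inr () ∧ (∀ i < k, t i = Sum.inl (f i)) ∧
    (∀ i j : ℕ, i < j → j < k → f j < f i)}

lemma cyl_open (t : ℕ → (ℕ ⊕ Unit)) (N : ℕ) :
    IsOpen {t' : ℕ → (ℕ ⊕ Unit) | ∀ i < N, t' i = t i} := by
  have h : {t' : ℕ → (ℕ ⊕ Unit) | ∀ i < N, t' i = t i}
      = ⋂ i ∈ Finset.range N, (fun t' : ℕ → (ℕ ⊕ Unit) => t' i) ⁻¹' {t i} := by
    ext t'; simp
  rw [h]
  exact isOpen_biInter_finset fun i _ =>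
    (continuous_apply i).isOpen_preimage _ (isOpen_discrete _)

lemma consec_to_pairwise (a : ℕ → ℕ) (m : ℕ)
    (h : ∀ i, i + 1 < m → a (i + 1) < a i) :
    ∀ i j, i < j → j < m → a j < a i := by
  intro i j hij hjm
  induction j with
  | zero => omega
  | succ j ih =>
    rcases Nat.lt_succ_iff_lt_or_eq.mp hij with h' | h'
    · exact lt_trans (h j hjm) (ih h' (by omega))
    · subst h'; exact h i hjm

lemma not_mem_of_agree {t t' : ℕ → (ℕ ⊕ Unit)} {N i : ℕ} {a : ℕ → ℕ}
    (hN : ∀ j < N, t j = Sum.inl (a j)) (hi : i + 1 < N)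
    (hinc : a i ≤ a (i + 1))
    (hag : ∀ j < N, t' j = t j) : t' ∉ DecBlock := by
  rintro ⟨k, f, hk, hf, hd⟩
  by_cases hki : k ≤ i + 1
  · have h1 := hag k (by omega)
    rw [hN k (by omega)] at h1
    rw [h1] at hk; simp at hk
  · push_neg at hki
    have h1 : t' i = Sum.inl (f i) := hf i (by omega)
    have h2 : t' (i + 1) = Sum.inl (f (i + 1)) := hf (i + 1) (by omega)
    rw [hag i (by omega), hN i (by omega)] at h1
    rw [hag (i + 1) hi, hN (i + 1) hi] at h2
    have h3 := hd i (i + 1) (by omega) hki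
    simp at h1 h2; omega

lemma open_T : IsOpen DecBlock := by
  rw [isOpen_iff_forall_mem_open]
  rintro t ⟨k, f, hk, hf, hd⟩
  refine ⟨{t' | ∀ i < k + 1, t' i = t i}, ?_, cyl_open t (k + 1), fun i _ => rfl⟩
  intro t' hag
  exact ⟨k, f, by rw [hag k (by omega)]; exact hk,
    fun i hi => by rw [hag i (by omega)]; exact hf i hi, hd⟩

lemma closed_T : IsClosed DecBlock := by
  rw [← isOpen_compl_iff, isOpen_iff_forall_mem_open]
  intro t ht
  set a : ℕ → ℕ := fun j => Sum.elim id (fun _ => 0) (t j) with ha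
  by_cases hex : ∃ m, t m = Sum.inr ()
  · set m := Nat.find hex with hm
    have hms := Nat.find_spec hex
    have hinl : ∀ j < m, t j = Sum.inl (a j) := by
      intro j hj
      have := Nat.find_min hex hj
      rcases h' : t j with b | u
      · simp [ha, h']
      · cases u; exact absurd h' this
    have hiv : ∃ i, i + 1 < m ∧ a i ≤ a (i + 1) := by
      by_contra hc
      push_neg at hc
      exact ht ⟨m, a, hms, hinl, consec_to_pairwise a m (fun i hi => hc i hi)⟩
    obtain ⟨i, hi, hinc⟩ := hiv
    refine ⟨{t' | ∀ j < i + 2, t' j = t j}, ?_, cyl_open t (i + 2), fun j _ => rfl⟩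
    intro t' hag
    exact not_mem_of_agree (fun j hj => hinl j (by omega)) (by omega : i + 1 < i + 2) hinc hag
  · push_neg at hex
    have hinl : ∀ j, t j = Sum.inl (a j) := by
      intro j
      rcases h' : t j with b | u
      · simp [ha, h']
      · cases u; exact absurd h' (hex j)
    have hiv : ∃ i, a i ≤ a (i + 1) := by
      by_contra hc
      push_neg at hc
      have hbound : ∀ n, a n + n ≤ a 0 := by
        intro n
        induction n with
        | zero => omega
        | succ n ih => have := hc n; omega
      have := hbound (a 0 + 1); omega
    obtain ⟨i, hinc⟩ := hiv
    refine ⟨{t' | ∀ j < i + 2, t' j = t j}, ?_, cyl_open t (i + 2), fun j _ => rfl⟩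
    intro t' hag
    exact not_mem_of_agree (fun j _ => hinl j) (by omega : i + 1 < i + 2) hinc hag

lemma neither (n : ℕ) : ∃ w : List (ℕ ⊕ Unit),
    w.length = n ∧ ¬GoodPrefix DecBlock w ∧ ¬BadPrefix DecBlock w := by
  refine ⟨List.ofFn (fun i : Fin n => Sum.inl (n - 1 - i.1)), by simp, ?_, ?_⟩
  · intro hg
    have hmem := hg (fun i => Sum.inl (if i < n then n - 1 - i else 0)) ?ext
    case ext =>
      intro i
      have hi : i.1 < n := by have := i.2; simpa using this
      simp [List.get_ofFn, hi]
    obtain ⟨k, f, hk, _, _⟩ := hmem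
    simp at hk
  · intro hb
    refine hb (fun i => if i < n then Sum.inl (n - 1 - i) else Sum.inr ()) ?_ ?_
    · intro i
      have hi : i.1 < n := by have := i.2; simpa using this
      simp [List.get_ofFn, hi]
    · exact ⟨n, fun i => n - 1 - i, by simp, fun i hi => by simp [hi],
        fun i j hij hjn => by dsimp only; omega⟩

theorem clopen_without_bounded_discriminating_prefixes :
    IsClopen DecBlock ∧
    (∀ n : ℕ, ∃ w : List (ℕ ⊕ Unit),
      w.length = n ∧ ¬GoodPrefix DecBlock w ∧ ¬BadPrefix DecBlock w) := by
  exact ⟨⟨closed_T, open_T⟩, neither⟩
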